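/- Let n ≥ 1, let μ = (μ_1,…,μ_n) ∈ ℂⁿ satisfy μ_1 + ⋯ + μ_n = 0, let ε ∈ {+1,−1}ⁿ, and let 0 ≤ p ≤ n. Set 𝔍 = max_l |Im μ_l|. Then |e_p(ε_1·e^{−2πiμ_1}, …, ε_n·e^{−2πiμ_n})| ≤ C(n,p) · exp(2π · min(p, n−p) · 𝔍), where e_p denotes the elementary symmetric polynomial of degree p in n variables and C(n,p) is the binomial coefficient n choose p. -/

import Mathlib

/-- Bound for the elementary symmetric polynomial of degree `p` in the numbers
`ε_l·e^{-2πiμ_l}`, where `μ_1 + ⋯ + μ_n = 0`: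
`|e_p| ≤ C(n,p)·exp(2π·min(p,n-p)·𝔍)` with `𝔍 = max_l |Im μ_l|`. -/
theorem stmt_14 (n : ℕ) (hn : 1 ≤ n) (μ : Fin n → ℂ) (hsum : ∑ l, μ l = 0)
    (ε : Fin n → ℂ) (hε : ∀ l, ε l = 1 ∨ ε l = -1) (p : ℕ) (hp : p ≤ n) :
    ‖∑ t ∈ Finset.powersetCard p (Finset.univ : Finset (Fin n)),
        ∏ l ∈ t, ε l * Complex.exp (-(2 * Real.pi * Complex.I * μ l))‖ ≤
      (n.choose p : ℝ) * Real.exp (2 * Real.pi * ((min p (n - p) : ℕ) : ℝ) *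
        Finset.univ.sup' (Finset.univ_nonempty_iff.mpr ⟨⟨0, hn⟩⟩) fun l => |(μ l).im|) := by
  set J : ℝ := Finset.univ.sup' (Finset.univ_nonempty_iff.mpr ⟨⟨0, hn⟩⟩)
      (fun l => |(μ l).im|) with hJdef
  have hJle : ∀ l, |(μ l).im| ≤ J := fun l => by rw [hJdef]; exact Finset.le_sup' (fun l => |(μ l).im|) (Finset.mem_univ l)
  have hJ0 : 0 ≤ J := le_trans (abs_nonneg _) (hJle ⟨0, hn⟩)
  have hsumim : ∑ l, (μ l).im = 0 := by
    have := congrArg Complex.im hsum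
    simpa using this
  have hπ : (0:ℝ) ≤ 2 * Real.pi := by positivity
  have key : ∀ t ∈ Finset.powersetCard p (Finset.univ : Finset (Fin n)),
      ‖∏ l ∈ t, ε l * Complex.exp (-(2 * Real.pi * Complex.I * μ l))‖ ≤
        Real.exp (2 * Real.pi * ((min p (n - p) : ℕ) : ℝ) * J) := by
    intro t ht
    rw [Finset.mem_powersetCard] at ht
    have habs : ‖∏ l ∈ t, ε l * Complex.exp (-(2 * Real.pi * Complex.I * μ l))‖
        = Real.exp (2 * Real.pi * ∑ l ∈ t, (μ l).im) := by
      rw [norm_prod, Finset.mul_sum, Real.exp_sum]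
      apply Finset.prod_congr rfl
      intro l _
      rw [norm_mul, Complex.norm_exp]
      have hε1 : ‖ε l‖ = 1 := by
        rcases hε l with h | h <;> simp [h]
      rw [hε1, one_mul]
      congr 1
      simp [Complex.mul_re, Complex.mul_im]
    rw [habs, Real.exp_le_exp]
    have hS1 : ∑ l ∈ t, (μ l).im ≤ (p : ℝ) * J := by
      calc ∑ l ∈ t, (μ l).im ≤ ∑ l ∈ t, J :=
            Finset.sum_le_sum fun l _ => (le_abs_self _).trans (hJle l)
        _ = (p : ℝ) * J := by rw [Finset.sum_const, ht.2]; simp [nsmul_eq_mul]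
    have hS2 : ∑ l ∈ t, (μ l).im ≤ ((n - p : ℕ) : ℝ) * J := by
      have hsplit : ∑ l ∈ t, (μ l).im = - ∑ l ∈ Finset.univ \ t, (μ l).im := by
        have := Finset.sum_sdiff_eq_sub (f := fun l => (μ l).im) ht.1
        rw [hsumim] at this
        linarith
      have hcard : (Finset.univ \ t).card = n - p := by
        rw [Finset.card_sdiff_of_subset ht.1, ht.2, Finset.card_univ, Fintype.card_fin]
      have : - ((n - p : ℕ) : ℝ) * J ≤ ∑ l ∈ Finset.univ \ t, (μ l).im := by
        calc -((n - p : ℕ) : ℝ) * J = ∑ l ∈ Finset.univ \ t, (-J) := by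
              rw [Finset.sum_const, hcard, nsmul_eq_mul]; ring
          _ ≤ _ := Finset.sum_le_sum fun l _ => by
              have := (abs_le.mp ((le_refl _).trans (hJle l))).1; linarith
      rw [hsplit]; linarith
    have hmin : ∑ l ∈ t, (μ l).im ≤ ((min p (n - p) : ℕ) : ℝ) * J := by
      rcases min_cases p (n - p) with ⟨h, _⟩ | ⟨h, _⟩ <;> rw [h] <;> [exact hS1; exact hS2]
    calc 2 * Real.pi * ∑ l ∈ t, (μ l).im
        ≤ 2 * Real.pi * (((min p (n - p) : ℕ) : ℝ) * J) := by
          exact mul_le_mul_of_nonneg_left hmin hπ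
      _ = 2 * Real.pi * ((min p (n - p) : ℕ) : ℝ) * J := by ring
  calc ‖∑ t ∈ Finset.powersetCard p (Finset.univ : Finset (Fin n)),
        ∏ l ∈ t, ε l * Complex.exp (-(2 * Real.pi * Complex.I * μ l))‖
      ≤ ∑ t ∈ Finset.powersetCard p (Finset.univ : Finset (Fin n)),
          ‖∏ l ∈ t, ε l * Complex.exp (-(2 * Real.pi * Complex.I * μ l))‖ :=
        norm_sum_le _ _
    _ ≤ ∑ t ∈ Finset.powersetCard p (Finset.univ : Finset (Fin n)),
          Real.exp (2 * Real.pi * ((min p (n - p) : ℕ) : ℝ) * J) :=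
        Finset.sum_le_sum key
    _ = (n.choose p : ℝ) * Real.exp (2 * Real.pi * ((min p (n - p) : ℕ) : ℝ) * J) := by
        rw [Finset.sum_const, Finset.card_powersetCard, Finset.card_univ, Fintype.card_fin,
          nsmul_eq_mul]
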